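/- Let G = (U ∪ V, E) be a finite bipartite graph, let w_e > 0 for each e ∈ E, and let μ be the Gibbs distribution on matchings of G, i.e., μ(M) ∝ ∏_{e∈M} w_e over all matchings M. For a vertex z, let Occ(z) denote the event that the random matching S ∼ μ contains an edge incident to z. Then for every u ∈ U and v ∈ V, the events 'u is unmatched' and 'v is unmatched' are positively correlated: P[not Occ(u) and not Occ(v)] ≥ P[not Occ(u)] · P[not Occ(v)]. -/

import Mathlib

open Finset

/-- `S` is a matching of the bipartite graph whose edge `e` joins `eu e ∈ U` to `ev e ∈ V`:
no two distinct edges of `S` share an endpoint. -/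
def IsBipMatching {U V E : Type*} (eu : E → U) (ev : E → V) (S : Finset E) : Prop :=
  ∀ e ∈ S, ∀ f ∈ S, e ≠ f → eu e ≠ eu f ∧ ev e ≠ ev f

instance {U V E : Type*} [DecidableEq U] [DecidableEq V] [DecidableEq E]
    (eu : E → U) (ev : E → V) (S : Finset E) : Decidable (IsBipMatching eu ev S) :=
  inferInstanceAs (Decidable (∀ e ∈ S, ∀ f ∈ S, e ≠ f → eu e ≠ eu f ∧ ev e ≠ ev f))

section Aux

variable {U V E : Type*} [DecidableEq U] [DecidableEq V] [DecidableEq E]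
variable (eu : E → U) (ev : E → V) (w : E → ℝ)

/-- Sum of weights of matchings inside the allowed edge set `A`. -/
noncomputable def Zs (A : Finset E) : ℝ :=
  ∑ S ∈ A.powerset.filter (fun S => IsBipMatching eu ev S), ∏ e ∈ S, w e

lemma matching_subset {S T : Finset E} (h : IsBipMatching eu ev T) (hST : S ⊆ T) :
    IsBipMatching eu ev S := fun e he f hf hef => h e (hST he) f (hST hf) hef

lemma Zs_pos (hw : ∀ e, 0 < w e) (A : Finset E) : 0 < Zs eu ev w A := by
  apply Finset.sum_pos' (fun S _ => Finset.prod_nonneg fun e _ => (hw e).le)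
  refine ⟨∅, ?_, by simp⟩
  rw [Finset.mem_filter]; simp [IsBipMatching]

lemma Zs_split (A : Finset E) {e : E} (he : e ∈ A) :
    Zs eu ev w A = Zs eu ev w (A.erase e)
      + w e * Zs eu ev w ((A.erase e).filter (fun f => eu f ≠ eu e ∧ ev f ≠ ev e)) := by
  classical
  unfold Zs
  rw [← Finset.sum_filter_add_sum_filter_not
      (A.powerset.filter (fun S => IsBipMatching eu ev S)) (fun S => e ∈ S)]
  rw [add_comm]
  congr 1
  · -- `e ∉ S` part equals `Zs (A.erase e)`
    apply Finset.sum_congr _ fun _ _ => rfl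
    ext S
    simp only [mem_filter, mem_powerset, Finset.subset_erase]
    tauto
  · rw [Finset.mul_sum]
    refine Finset.sum_bij' (fun S _ => S.erase e) (fun T _ => insert e T) ?_ ?_ ?_ ?_ ?_
    · rintro S hS
      simp only [mem_filter, mem_powerset] at hS ⊢
      obtain ⟨⟨hSA, hM⟩, heS⟩ := hS
      refine ⟨fun f hf => ?_, matching_subset eu ev hM (Finset.erase_subset e S)⟩
      rw [mem_erase] at hf
      rw [mem_filter, mem_erase]
      exact ⟨⟨hf.1, hSA hf.2⟩, hM f hf.2 e heS hf.1⟩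
    · rintro T hT
      simp only [mem_filter, mem_powerset] at hT ⊢
      obtain ⟨hTsub, hM⟩ := hT
      have hcompat : ∀ f ∈ T, f ∈ A.erase e ∧ eu f ≠ eu e ∧ ev f ≠ ev e := by
        intro f hf; simpa [mem_filter] using hTsub hf
      refine ⟨⟨Finset.insert_subset he fun f hf => mem_of_mem_erase (hcompat f hf).1, ?_⟩,
        mem_insert_self e T⟩
      intro f hf g hg hfg
      rcases mem_insert.1 hf with hfe | hfT <;> rcases mem_insert.1 hg with hge | hgT
      · exact absurd (hfe.trans hge.symm) hfg
      · rw [hfe]; exact ⟨Ne.symm (hcompat g hgT).2.1, Ne.symm (hcompat g hgT).2.2⟩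
      · rw [hge]; exact (hcompat f hfT).2
      · exact hM f hfT g hgT hfg
    · rintro S hS
      simp only [mem_filter] at hS
      exact Finset.insert_erase hS.2
    · rintro T hT
      simp only [mem_filter, mem_powerset] at hT
      have heT : e ∉ T := fun h => (mem_erase.1 (mem_filter.1 (hT.1 h)).1).1 rfl
      exact Finset.erase_insert heT
    · rintro S hS
      simp only [mem_filter] at hS
      exact (Finset.mul_prod_erase S w hS.2).symm

end Aux


lemma key_corr {U V E : Type*} [DecidableEq U] [DecidableEq V] [DecidableEq E]
    (eu : E → U) (ev : E → V) (w : E → ℝ) (hw : ∀ e, 0 < w e) :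
    ∀ n : ℕ, ∀ A : Finset E, A.card ≤ n →
      (∀ (u : U) (v : V),
        Zs eu ev w (A.filter fun f => eu f ≠ u) * Zs eu ev w (A.filter fun f => ev f ≠ v) ≤
        Zs eu ev w A * Zs eu ev w (A.filter fun f => eu f ≠ u ∧ ev f ≠ v)) ∧
      (∀ y v : V, y ≠ v →
        Zs eu ev w A * Zs eu ev w (A.filter fun f => ev f ≠ y ∧ ev f ≠ v) ≤
        Zs eu ev w (A.filter fun f => ev f ≠ y) * Zs eu ev w (A.filter fun f => ev f ≠ v)) := by
  intro n
  induction n with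
  | zero =>
    intro A hA
    rw [Nat.le_zero, Finset.card_eq_zero] at hA
    subst hA
    simp only [Finset.filter_empty]
    exact ⟨fun _ _ => le_refl _, fun _ _ _ => le_refl _⟩
  | succ n ih =>
    intro A hA
    constructor
    · intro u v
      by_cases hex : ∃ e ∈ A, eu e = u
      · obtain ⟨e, heA, hue⟩ := hex
        have hcard : (A.erase e).card ≤ n := by
          have h1 := Finset.card_erase_of_mem heA
          have h2 : 1 ≤ A.card := Finset.card_pos.2 ⟨e, heA⟩
          omega
        have hsplit := Zs_split eu ev w A heA
        rw [hue] at hsplit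
        have h_u : A.filter (fun f => eu f ≠ u)
            = (A.erase e).filter (fun f => eu f ≠ u) := by
          ext f
          simp only [mem_filter, mem_erase]
          constructor
          · rintro ⟨hfA, hne⟩; exact ⟨⟨fun h => hne (h ▸ hue), hfA⟩, hne⟩
          · rintro ⟨⟨_, hfA⟩, hne⟩; exact ⟨hfA, hne⟩
        have h_uv : A.filter (fun f => eu f ≠ u ∧ ev f ≠ v)
            = (A.erase e).filter (fun f => eu f ≠ u ∧ ev f ≠ v) := by
          ext f
          simp only [mem_filter, mem_erase]
          constructor
          · rintro ⟨hfA, hne⟩; exact ⟨⟨fun h => hne.1 (h ▸ hue), hfA⟩, hne⟩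
          · rintro ⟨⟨_, hfA⟩, hne⟩; exact ⟨hfA, hne⟩
        by_cases hyv : ev e = v
        · -- the removed edge is the edge (u, v) itself
          rw [hyv] at hsplit
          have h_v : A.filter (fun f => ev f ≠ v)
              = (A.erase e).filter (fun f => ev f ≠ v) := by
            ext f
            simp only [mem_filter, mem_erase]
            constructor
            · rintro ⟨hfA, hne⟩; exact ⟨⟨fun h => hne (h ▸ hyv), hfA⟩, hne⟩
            · rintro ⟨⟨_, hfA⟩, hne⟩; exact ⟨hfA, hne⟩
          rw [h_u, h_uv, h_v, hsplit]
          have ih1 := (ih (A.erase e) hcard).1 u v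
          have hp := Zs_pos eu ev w hw ((A.erase e).filter (fun f => eu f ≠ u ∧ ev f ≠ v))
          nlinarith [ih1, mul_nonneg (mul_nonneg (hw e).le hp.le) hp.le]
        · -- removed edge is (u, y) with y ≠ v
          have heAv : e ∈ A.filter (fun f => ev f ≠ v) := mem_filter.2 ⟨heA, hyv⟩
          have hsplitv := Zs_split eu ev w (A.filter (fun f => ev f ≠ v)) heAv
          rw [hue] at hsplitv
          have hv1 : (A.filter (fun f => ev f ≠ v)).erase e
              = (A.erase e).filter (fun f => ev f ≠ v) := by
            ext f
            simp only [mem_filter, mem_erase]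
            tauto
          have hv2 : ((A.filter (fun f => ev f ≠ v)).erase e).filter
                (fun f => eu f ≠ u ∧ ev f ≠ ev e)
              = (A.erase e).filter (fun f => eu f ≠ u ∧ ev f ≠ ev e ∧ ev f ≠ v) := by
            ext f
            simp only [mem_filter, mem_erase]
            tauto
          rw [hv2, hv1] at hsplitv
          have ih1 := (ih (A.erase e) hcard).1 u v
          have hBcard : ((A.erase e).filter (fun f => eu f ≠ u)).card ≤ n :=
            le_trans (Finset.card_le_card (Finset.filter_subset _ _)) hcard
          have ih2 := (ih ((A.erase e).filter (fun f => eu f ≠ u)) hBcard).2 (ev e) v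
            (fun h => hyv h)
          rw [Finset.filter_filter, Finset.filter_filter, Finset.filter_filter] at ih2
          rw [h_u, h_uv, hsplit, hsplitv]
          have hmul := mul_le_mul_of_nonneg_left ih2 (hw e).le
          nlinarith [hmul, ih1]
      · -- no edge at u
        push_neg at hex
        have h1 : A.filter (fun f => eu f ≠ u) = A :=
          Finset.filter_true_of_mem hex
        have h2 : A.filter (fun f => eu f ≠ u ∧ ev f ≠ v)
            = A.filter (fun f => ev f ≠ v) := by
          ext f
          simp only [mem_filter]
          exact ⟨fun h => ⟨h.1, h.2.2⟩, fun h => ⟨h.1, hex f h.1, h.2⟩⟩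
        rw [h1, h2]
    · intro y v hyvne
      by_cases hex : ∃ e ∈ A, ev e = y
      · obtain ⟨e, heA, hye⟩ := hex
        have hcard : (A.erase e).card ≤ n := by
          have h1 := Finset.card_erase_of_mem heA
          have h2 : 1 ≤ A.card := Finset.card_pos.2 ⟨e, heA⟩
          omega
        have hsplit := Zs_split eu ev w A heA
        rw [hye] at hsplit
        have h_y : A.filter (fun f => ev f ≠ y)
            = (A.erase e).filter (fun f => ev f ≠ y) := by
          ext f
          simp only [mem_filter, mem_erase]
          constructor
          · rintro ⟨hfA, hne⟩; exact ⟨⟨fun h => hne (h ▸ hye), hfA⟩, hne⟩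
          · rintro ⟨⟨_, hfA⟩, hne⟩; exact ⟨hfA, hne⟩
        have h_yv : A.filter (fun f => ev f ≠ y ∧ ev f ≠ v)
            = (A.erase e).filter (fun f => ev f ≠ y ∧ ev f ≠ v) := by
          ext f
          simp only [mem_filter, mem_erase]
          constructor
          · rintro ⟨hfA, hne⟩; exact ⟨⟨fun h => hne.1 (h ▸ hye), hfA⟩, hne⟩
          · rintro ⟨⟨_, hfA⟩, hne⟩; exact ⟨hfA, hne⟩
        have hvne : ev e ≠ v := hye ▸ hyvne
        have heAv : e ∈ A.filter (fun f => ev f ≠ v) := mem_filter.2 ⟨heA, hvne⟩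
        have hsplitv := Zs_split eu ev w (A.filter (fun f => ev f ≠ v)) heAv
        rw [hye] at hsplitv
        have hv1 : (A.filter (fun f => ev f ≠ v)).erase e
            = (A.erase e).filter (fun f => ev f ≠ v) := by
          ext f
          simp only [mem_filter, mem_erase]
          tauto
        have hv2 : ((A.filter (fun f => ev f ≠ v)).erase e).filter
              (fun f => eu f ≠ eu e ∧ ev f ≠ y)
            = (A.erase e).filter (fun f => eu f ≠ eu e ∧ ev f ≠ y ∧ ev f ≠ v) := by
          ext f
          simp only [mem_filter, mem_erase]
          tauto
        rw [hv2, hv1] at hsplitv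
        have ihB := (ih (A.erase e) hcard).2 y v hyvne
        have hCcard : ((A.erase e).filter (fun f => ev f ≠ y)).card ≤ n :=
          le_trans (Finset.card_le_card (Finset.filter_subset _ _)) hcard
        have ihA := (ih ((A.erase e).filter (fun f => ev f ≠ y)) hCcard).1 (eu e) v
        rw [Finset.filter_filter, Finset.filter_filter, Finset.filter_filter] at ihA
        have hc1 : (A.erase e).filter (fun f => ev f ≠ y ∧ eu f ≠ eu e)
            = (A.erase e).filter (fun f => eu f ≠ eu e ∧ ev f ≠ y) := by
          ext f; simp only [mem_filter]; tauto
        have hc2 : (A.erase e).filter (fun f => ev f ≠ y ∧ ev f ≠ v)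
            = (A.erase e).filter (fun f => ev f ≠ y ∧ ev f ≠ v) := rfl
        have hc3 : (A.erase e).filter (fun f => ev f ≠ y ∧ eu f ≠ eu e ∧ ev f ≠ v)
            = (A.erase e).filter (fun f => eu f ≠ eu e ∧ ev f ≠ y ∧ ev f ≠ v) := by
          ext f; simp only [mem_filter]; tauto
        rw [hc1, hc3] at ihA
        rw [h_y, h_yv, hsplit, hsplitv]
        have hmul := mul_le_mul_of_nonneg_left ihA (hw e).le
        nlinarith [hmul, ihB]
      · -- no edge at y
        push_neg at hex
        have h1 : A.filter (fun f => ev f ≠ y) = A :=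
          Finset.filter_true_of_mem hex
        have h2 : A.filter (fun f => ev f ≠ y ∧ ev f ≠ v)
            = A.filter (fun f => ev f ≠ v) := by
          ext f
          simp only [mem_filter]
          exact ⟨fun h => ⟨h.1, h.2.2⟩, fun h => ⟨h.1, hex f h.1, h.2⟩⟩
        rw [h1, h2]

theorem stmt_3
    {U V E : Type*} [Fintype U] [Fintype V] [Fintype E]
    [DecidableEq U] [DecidableEq V] [DecidableEq E]
    -- a finite simple bipartite graph
    (eu : E → U) (ev : E → V)
    (hsimple : Function.Injective (fun e => (eu e, ev e)))
    (w : E → ℝ) (hw : ∀ e, 0 < w e)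
    (u : U) (v : V)
    -- partition function of the Gibbs distribution on matchings
    (Z : ℝ)
    (hZ : Z = ∑ S ∈ univ.filter (fun S : Finset E => IsBipMatching eu ev S), ∏ e ∈ S, w e) :
    -- P[u unmatched] * P[v unmatched] ≤ P[u unmatched and v unmatched]
    ((∑ S ∈ univ.filter
        (fun S : Finset E => IsBipMatching eu ev S ∧ ∀ e ∈ S, eu e ≠ u),
        ∏ e ∈ S, w e) / Z) *
    ((∑ S ∈ univ.filter
        (fun S : Finset E => IsBipMatching eu ev S ∧ ∀ e ∈ S, ev e ≠ v),
        ∏ e ∈ S, w e) / Z) ≤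
    (∑ S ∈ univ.filter
        (fun S : Finset E => IsBipMatching eu ev S ∧ (∀ e ∈ S, eu e ≠ u) ∧ (∀ e ∈ S, ev e ≠ v)),
        ∏ e ∈ S, w e) / Z := by
  have hZpos : 0 < Z := hZ ▸ (by
    rw [show (univ.filter fun S : Finset E => IsBipMatching eu ev S)
        = (univ : Finset E).powerset.filter (fun S => IsBipMatching eu ev S) by
      rw [Finset.powerset_univ]]
    exact Zs_pos eu ev w hw univ)
  have hZeq : Z = Zs eu ev w univ := by
    rw [hZ]; unfold Zs; rw [Finset.powerset_univ]
  have hsetU : univ.filter (fun S : Finset E => IsBipMatching eu ev S ∧ ∀ e ∈ S, eu e ≠ u)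
      = ((univ : Finset E).filter fun f => eu f ≠ u).powerset.filter
          (fun S => IsBipMatching eu ev S) := by
    ext S
    simp only [mem_filter, mem_powerset, mem_univ, true_and, Finset.subset_iff]
    tauto
  have hsetV : univ.filter (fun S : Finset E => IsBipMatching eu ev S ∧ ∀ e ∈ S, ev e ≠ v)
      = ((univ : Finset E).filter fun f => ev f ≠ v).powerset.filter
          (fun S => IsBipMatching eu ev S) := by
    ext S
    simp only [mem_filter, mem_powerset, mem_univ, true_and, Finset.subset_iff]
    tauto
  have hsetUV : univ.filter (fun S : Finset E => IsBipMatching eu ev S ∧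
        (∀ e ∈ S, eu e ≠ u) ∧ (∀ e ∈ S, ev e ≠ v))
      = ((univ : Finset E).filter fun f => eu f ≠ u ∧ ev f ≠ v).powerset.filter
          (fun S => IsBipMatching eu ev S) := by
    ext S
    simp only [mem_filter, mem_powerset, mem_univ, true_and, Finset.subset_iff]
    constructor
    · rintro ⟨hM, h1, h2⟩
      exact ⟨fun {f} hf => ⟨h1 f hf, h2 f hf⟩, hM⟩
    · rintro ⟨hsub, hM⟩
      exact ⟨hM, fun f hf => (hsub hf).1, fun f hf => (hsub hf).2⟩
  rw [hsetU, hsetV, hsetUV]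
  have hkey := (key_corr eu ev w hw (univ : Finset E).card univ le_rfl).1 u v
  rw [← hZeq] at hkey
  rw [show (∑ S ∈ ((univ : Finset E).filter fun f => eu f ≠ u).powerset.filter
      (fun S => IsBipMatching eu ev S), ∏ e ∈ S, w e)
      = Zs eu ev w ((univ : Finset E).filter fun f => eu f ≠ u) from rfl]
  rw [show (∑ S ∈ ((univ : Finset E).filter fun f => ev f ≠ v).powerset.filter
      (fun S => IsBipMatching eu ev S), ∏ e ∈ S, w e)
      = Zs eu ev w ((univ : Finset E).filter fun f => ev f ≠ v) from rfl]
  rw [show (∑ S ∈ ((univ : Finset E).filter fun f => eu f ≠ u ∧ ev f ≠ v).powerset.filter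
      (fun S => IsBipMatching eu ev S), ∏ e ∈ S, w e)
      = Zs eu ev w ((univ : Finset E).filter fun f => eu f ≠ u ∧ ev f ≠ v) from rfl]
  rw [div_mul_div_comm, div_le_div_iff₀ (by positivity) hZpos]
  nlinarith [hkey, hZpos]
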